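/- Let X ∈ R^{n×p} (n ≥ p) and U ∈ R^{n×p} with UᵀU = I_p. The following are equivalent: (i) U belongs to the convex subdifferential of the nuclear norm at X; (ii) ⟨U, X⟩ = ‖X‖_* (Frobenius inner product); (iii) XUᵀ is symmetric positive semidefinite. -/

import Mathlib

open Matrix

noncomputable def nuclearNorm {m n : Type*} [Fintype m] [Fintype n] [DecidableEq n]
    (A : Matrix m n ℝ) : ℝ :=
  ((Matrix.posSemidef_conjTranspose_mul_self A).1.eigenvectorUnitary.1 *
    diagonal ((RCLike.ofReal : ℝ → ℝ) ∘ (√·) ∘ (Matrix.posSemidef_conjTranspose_mul_self A).1.eigenvalues) *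
    (star (Matrix.posSemidef_conjTranspose_mul_self A).1.eigenvectorUnitary : Matrix n n ℝ)).trace

noncomputable def opNorm {m n : Type*} [Fintype m] [Fintype n] [DecidableEq m] [DecidableEq n]
    (A : Matrix m n ℝ) : ℝ :=
  ‖(LinearMap.toContinuousLinearMap
      (Matrix.toEuclideanLin A : EuclideanSpace ℝ n →ₗ[ℝ] EuclideanSpace ℝ m))‖

def finner {m n : Type*} [Fintype m] [Fintype n] (A B : Matrix m n ℝ) : ℝ :=
  (Aᵀ * B).trace

noncomputable def nuclearSubdiff {m n : Type*} [Fintype m] [Fintype n] [DecidableEq n]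
    (X : Matrix m n ℝ) : Set (Matrix m n ℝ) :=
  {Y | ∀ Z, nuclearNorm X + finner Y (Z - X) ≤ nuclearNorm Z}

def rectDiag (n p : ℕ) (s : Fin p → ℝ) : Matrix (Fin n) (Fin p) ℝ :=
  Matrix.of fun i j => if (i : ℕ) = (j : ℕ) then s j else 0

def blockIR (n p r : ℕ) (R : Matrix (Fin (n - r)) (Fin (p - r)) ℝ) :
    Matrix (Fin n) (Fin p) ℝ :=
  Matrix.of fun i j =>
    if h : (i : ℕ) < r ∨ (j : ℕ) < r then (if (i : ℕ) = (j : ℕ) then 1 else 0)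
    else R ⟨i - r, by have := i.isLt; omega⟩ ⟨j - r, by have := j.isLt; omega⟩

open scoped MatrixOrder

lemma nn_eq {m n : Type*} [Fintype m] [Fintype n] [DecidableEq n] (A : Matrix m n ℝ) :
    nuclearNorm A = (CFC.sqrt (Aᴴ * A)).trace := by
  have hA := Matrix.posSemidef_conjTranspose_mul_self A
  unfold nuclearNorm
  rw [CFC.sqrt_eq_cfc, cfc_nnreal_eq_real _ (Aᴴ * A) hA.nonneg, hA.1.cfc_eq]
  simp only [IsHermitian.cfc, Unitary.conjStarAlgAut_apply]
  have hf : (fun x : ℝ => √x) = fun x => ((NNReal.sqrt x.toNNReal : NNReal) : ℝ) :=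
    funext fun x => by rw [Real.sqrt]
  rw [hf]

-- over ℝ conjTranspose = transpose
lemma ctt {m n : Type*} (A : Matrix m n ℝ) : Aᴴ = Aᵀ :=
  Matrix.conjTranspose_eq_transpose_of_trivial A

lemma master {m p : Type*} [Fintype m] [Fintype p] [DecidableEq p]
    (X U : Matrix m p ℝ) (hU : Uᵀ * U = 1) :
    (Uᵀ * X).trace ≤ (CFC.sqrt (Xᴴ * X)).trace ∧
    ((Uᵀ * X).trace = (CFC.sqrt (Xᴴ * X)).trace →
      (X * Uᵀ).PosSemidef) := by
  have hXX := Matrix.posSemidef_conjTranspose_mul_self X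
  set S : Matrix p p ℝ := CFC.sqrt (Xᴴ * X) with hSdef
  have hS : S.PosSemidef := (CFC.sqrt_nonneg (Xᴴ * X)).posSemidef
  have hSH : S.IsHermitian := hS.1
  set Q : Matrix p p ℝ := (hSH.eigenvectorUnitary : Matrix p p ℝ) with hQdef
  set d : p → ℝ := hSH.eigenvalues with hddef
  have hd : ∀ i, 0 ≤ d i := hS.eigenvalues_nonneg
  have hspec : S = Q * Matrix.diagonal d * Qᵀ := by
    have := hSH.spectral_theorem
    rwa [Unitary.conjStarAlgAut_apply, Matrix.star_eq_conjTranspose,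
      ctt] at this
  have hQ2 : Q * Qᵀ = 1 := by
    have := (Matrix.mem_unitaryGroup_iff).mp hSH.eigenvectorUnitary.2
    rwa [Matrix.star_eq_conjTranspose, ctt] at this
  have hQ1 : Qᵀ * Q = 1 := by
    have := (Matrix.mem_unitaryGroup_iff').mp hSH.eigenvectorUnitary.2
    rwa [Matrix.star_eq_conjTranspose, ctt] at this
  have hSsq : S * S = Xᵀ * X := by
    rw [← ctt]; exact CFC.sqrt_mul_sqrt_self _ hXX.nonneg
  set A : Matrix m p ℝ := U * Q with hAdef
  set B : Matrix m p ℝ := X * Q with hBdef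
  have hAA : Aᵀ * A = 1 := by
    rw [hAdef, Matrix.transpose_mul, Matrix.mul_assoc, ← Matrix.mul_assoc Uᵀ, hU,
      Matrix.one_mul, hQ1]
  have hBB : Bᵀ * B = Matrix.diagonal (fun i => d i ^ 2) := by
    rw [hBdef, Matrix.transpose_mul, Matrix.mul_assoc, ← Matrix.mul_assoc Xᵀ, ← hSsq]
    rw [hspec]
    have : Q * Matrix.diagonal d * Qᵀ * (Q * Matrix.diagonal d * Qᵀ) =
        Q * (Matrix.diagonal d * (Qᵀ * Q) * Matrix.diagonal d) * Qᵀ := by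
      simp only [Matrix.mul_assoc]
    rw [this, hQ1, Matrix.mul_one, Matrix.diagonal_mul_diagonal]
    have : Qᵀ * (Q * (Matrix.diagonal fun i => d i * d i) * Qᵀ * Q) =
        (Qᵀ * Q) * (Matrix.diagonal fun i => d i * d i) * (Qᵀ * Q) := by
      simp only [Matrix.mul_assoc]
    rw [this, hQ1, Matrix.one_mul, Matrix.mul_one]
    ext i; ring
  have colA : ∀ i, ∑ k, (A k i) ^ 2 = 1 := by
    intro i
    have h1 : (Aᵀ * A) i i = (1 : Matrix p p ℝ) i i := by rw [hAA]
    rw [Matrix.mul_apply, Matrix.one_apply_eq] at h1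
    simpa [Matrix.transpose_apply, sq] using h1
  have colB : ∀ i, ∑ k, (B k i) ^ 2 = d i ^ 2 := by
    intro i
    have h1 : (Bᵀ * B) i i = Matrix.diagonal (fun i => d i ^ 2) i i := by rw [hBB]
    rw [Matrix.mul_apply, Matrix.diagonal_apply_eq] at h1
    simpa [Matrix.transpose_apply, sq] using h1
  have hc : ∀ i, (Aᵀ * B) i i = ∑ k, A k i * B k i := by
    intro i; rw [Matrix.mul_apply]; simp [Matrix.transpose_apply]
  have hci : ∀ i, (Aᵀ * B) i i ≤ d i := by
    intro i
    have hcs := Finset.sum_mul_sq_le_sq_mul_sq Finset.univ (fun k => A k i) (fun k => B k i)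
    rw [colA i, colB i] at hcs
    rw [hc i]
    nlinarith [hd i, Finset.sum_mul_sq_le_sq_mul_sq Finset.univ (fun k => A k i) (fun k => B k i)]
  have htr : ∑ i, (Aᵀ * B) i i = (Uᵀ * X).trace := by
    have h2 : Aᵀ * B = Qᵀ * (Uᵀ * X) * Q := by
      rw [hAdef, hBdef, Matrix.transpose_mul]; simp only [Matrix.mul_assoc]
    have h3 : (Aᵀ * B).trace = ∑ i, (Aᵀ * B) i i := rfl
    rw [← h3, h2, Matrix.trace_mul_cycle, ← Matrix.mul_assoc, hQ2, Matrix.one_mul]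
  have htrS : S.trace = ∑ i, d i := by
    rw [hspec, Matrix.trace_mul_cycle, hQ1, Matrix.one_mul, Matrix.trace_diagonal]
  constructor
  · rw [← htr, htrS]
    exact Finset.sum_le_sum fun i _ => hci i
  · intro heq
    have hsum : ∑ i, (Aᵀ * B) i i = ∑ i, d i := by rw [htr, heq, htrS]
    have hzero : ∑ i, (d i - (Aᵀ * B) i i) = 0 := by
      rw [Finset.sum_sub_distrib, hsum, sub_self]
    have hceq : ∀ i, (Aᵀ * B) i i = d i := by
      intro i
      have := (Finset.sum_eq_zero_iff_of_nonneg (fun i _ => sub_nonneg.mpr (hci i))).mp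
        hzero i (Finset.mem_univ i)
      linarith
    have hBA : B = A * Matrix.diagonal d := by
      ext k i
      have hz : ∑ j, (B j i - d i * A j i) ^ 2 = 0 := by
        have expand : ∀ j, (B j i - d i * A j i) ^ 2 =
            B j i ^ 2 - 2 * d i * (A j i * B j i) + d i ^ 2 * A j i ^ 2 := by intro j; ring
        simp_rw [expand]
        rw [Finset.sum_add_distrib, Finset.sum_sub_distrib, colB i, ← Finset.mul_sum,
          ← Finset.mul_sum, ← hc i, hceq i, colA i]
        ring
      have := (Finset.sum_eq_zero_iff_of_nonneg (fun j _ => sq_nonneg _)).mp hz k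
        (Finset.mem_univ k)
      have hzz : B k i - d i * A k i = 0 := by
        exact (pow_eq_zero_iff two_ne_zero).mp this
      rw [Matrix.mul_diagonal]
      linarith
    have hXUS : X = U * S := by
      have h1 : X = B * Qᵀ := by
        rw [hBdef, Matrix.mul_assoc, hQ2, Matrix.mul_one]
      rw [h1, hBA, hAdef, hspec]; simp only [Matrix.mul_assoc]
    have : X * Uᵀ = U * S * Uᴴ := by rw [ctt, hXUS]
    rw [this]
    exact hS.mul_mul_conjTranspose_same U

lemma psd_imp_trace_eq {m p : Type*} [Fintype m] [Fintype p] [DecidableEq p]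
    (X U : Matrix m p ℝ) (hU : Uᵀ * U = 1) (hA : (X * Uᵀ).PosSemidef) :
    (Uᵀ * X).trace = (CFC.sqrt (Xᴴ * X)).trace := by
  have hUX : U * Xᵀ = X * Uᵀ := by
    have h := hA.1
    unfold Matrix.IsHermitian at h
    rw [ctt, Matrix.transpose_mul, Matrix.transpose_transpose] at h
    exact h
  have hBps : (Uᵀ * X).PosSemidef := by
    have h := hA.conjTranspose_mul_mul_same U
    rw [ctt] at h
    have e : Uᵀ * (X * Uᵀ) * U = Uᵀ * X := by
      calc Uᵀ * (X * Uᵀ) * U = Uᵀ * (X * (Uᵀ * U)) := by simp only [Matrix.mul_assoc]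
        _ = Uᵀ * X := by rw [hU, Matrix.mul_one]
    rwa [e] at h
  have hB2 : (Uᵀ * X) ^ 2 = Xᴴ * X := by
    rw [ctt, pow_two]
    calc Uᵀ * X * (Uᵀ * X) = Uᵀ * ((X * Uᵀ) * X) := by simp only [Matrix.mul_assoc]
      _ = Uᵀ * ((U * Xᵀ) * X) := by rw [hUX]
      _ = (Uᵀ * U) * (Xᵀ * X) := by simp only [Matrix.mul_assoc]
      _ = Xᵀ * X := by rw [hU, Matrix.one_mul]
  have hfinal : Uᵀ * X = CFC.sqrt (Xᴴ * X) :=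
    (CFC.sqrt_unique (by rw [← pow_two]; exact hB2) hBps.nonneg).symm
  rw [← hfinal]

theorem polarization_tfae {n p : ℕ} (hpn : p ≤ n)
    (X U : Matrix (Fin n) (Fin p) ℝ) (hU : Uᵀ * U = 1) :
    (U ∈ nuclearSubdiff X ↔ finner U X = nuclearNorm X) ∧
    (finner U X = nuclearNorm X ↔ (X * Uᵀ).PosSemidef) := by
  have e1 : ∀ Z : Matrix (Fin n) (Fin p) ℝ, finner U Z = (Uᵀ * Z).trace := fun _ => rfl
  have e2 : ∀ Z : Matrix (Fin n) (Fin p) ℝ,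
      nuclearNorm Z = (CFC.sqrt (Zᴴ * Z)).trace := fun Z => nn_eq Z
  refine ⟨⟨fun hsub => ?_, fun heq Z => ?_⟩, fun heq => ?_, fun hpsd => ?_⟩
  · have h0 := hsub 0
    have hzero : nuclearNorm (0 : Matrix (Fin n) (Fin p) ℝ) = 0 := by
      rw [e2, Matrix.conjTranspose_zero, Matrix.zero_mul, CFC.sqrt_zero, Matrix.trace_zero]
    have hfin : finner U (0 - X) = - finner U X := by
      unfold finner; rw [zero_sub, Matrix.mul_neg, Matrix.trace_neg]
    rw [hzero, hfin] at h0
    have hle := (master X U hU).1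
    rw [e1, e2]
    rw [e1, e2] at h0
    linarith
  · have hle := (master Z U hU).1
    have hfin : finner U (Z - X) = finner U Z - finner U X := by
      unfold finner; rw [Matrix.mul_sub, Matrix.trace_sub]
    rw [hfin, heq, e1 Z, e2 Z]
    linarith
  · refine (master X U hU).2 ?_
    rw [← e1, ← e2]; exact heq
  · rw [e1, e2]
    exact psd_imp_trace_eq X U hU hpsd
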